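/- Let Λ be a commutative Noetherian ring with ideal I, and let Λ̃ be a Zariski ring with respect to the ideal Ĩ = φ(I)·Λ̃ for a flat ring homomorphism φ: Λ → Λ̃ inducing isomorphisms Λ/Iⁿ ≅ Λ̃/Ĩⁿ. If M is a Λ-module with cl(Ann_Λ M) ⊇ Iⁿ (where cl denotes I-adic closure of the ideal), then M·Iⁿ = M·I^(n+1) and there is a short exact sequence 0 → M·Iⁿ → M → M⊗_Λ Λ̃ → 0; in particular M⊗_Λ Λ̃ ≅ M/M·Iⁿ. -/

import Mathlib

open TensorProduct

/-- Krull intersection: if `a ∈ ⋂ (J + Iᵐ)` in a Noetherian ring,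
then `(1+i)a ∈ J` for some `i ∈ I`. -/
lemma krull_aux {Λ : Type} [CommRing Λ] [IsNoetherianRing Λ] (I J : Ideal Λ)
    (a : Λ) (ha : ∀ m : ℕ, a ∈ J ⊔ I ^ m) : ∃ i ∈ I, (1 + i) * a ∈ J := by
  set q := Ideal.Quotient.mk J with hq
  have hx : q a ∈ ⨅ i : ℕ, (I.map q) ^ i • (⊤ : Submodule (Λ ⧸ J) (Λ ⧸ J)) := by
    rw [Submodule.mem_iInf]
    intro m
    obtain ⟨b, hb, c, hc, rfl⟩ := Submodule.mem_sup.mp (ha m)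
    rw [smul_eq_mul, Ideal.mul_top, map_add, Ideal.Quotient.eq_zero_iff_mem.mpr hb, zero_add,
      ← Ideal.map_pow]
    exact Ideal.mem_map_of_mem q hc
  obtain ⟨r, hr⟩ := (Ideal.mem_iInf_smul_pow_eq_bot_iff (I.map q) (q a)).mp hx
  obtain ⟨i₀, hi₀, hqi₀⟩ := (Ideal.mem_map_iff_of_surjective q Ideal.Quotient.mk_surjective).mp r.2
  refine ⟨-i₀, I.neg_mem hi₀, ?_⟩
  rw [← Ideal.Quotient.eq_zero_iff_mem, ← hq, map_mul, map_add, map_one, map_neg, hqi₀]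
  have : (r : Λ ⧸ J) * q a = q a := hr
  rw [add_mul, one_mul, neg_mul, this, add_neg_cancel]

/-- Let `Λ` be a commutative Noetherian ring with ideal `I`, and let
`Λ̃` (= `T`) be a Zariski ring with respect to the ideal `Ĩ = φ(I)·Λ̃` for a flat ring
homomorphism `φ : Λ → Λ̃` inducing isomorphisms `Λ/Iⁿ ≅ Λ̃/Ĩⁿ`. If `M` is a
`Λ`-module with `cl(Ann_Λ M) ⊇ Iⁿ` (closure in the `I`-adic topology), then
`M·Iⁿ = M·I^(n+1)` and there is a short exact sequence
`0 → M·Iⁿ → M → M ⊗_Λ Λ̃ → 0` (i.e. `φ_M : M → M ⊗_Λ Λ̃, m ↦ m ⊗ 1`, is surjective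
with kernel `M·Iⁿ`); in particular `M ⊗_Λ Λ̃ ≅ M/M·Iⁿ`. -/
theorem stmt3 (Λ : Type) [CommRing Λ] [IsNoetherianRing Λ] (I : Ideal Λ)
    (T : Type) [CommRing T] [Algebra Λ T] [Module.Flat Λ T]
    -- `T` is a Zariski ring w.r.t. `Ĩ = φ(I)T`: every element of `1 + Ĩ` is a unit
    (hzar : ∀ x ∈ I.map (algebraMap Λ T), IsUnit (1 + x))
    -- `φ` induces isomorphisms `Λ/Iᵐ ≅ T/Ĩᵐ`
    (hiso : ∀ m : ℕ, Function.Bijective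
      (Ideal.quotientMap (I := I ^ m) ((I.map (algebraMap Λ T)) ^ m) (algebraMap Λ T)
        (by rw [← Ideal.map_pow]; exact Ideal.le_comap_map)))
    (M : Type) [AddCommGroup M] [Module Λ M] (n : ℕ)
    (hcl : (I ^ n : Ideal Λ) ≤ ⨅ m : ℕ, ((⊤ : Submodule Λ M).annihilator ⊔ I ^ m)) :
    I ^ n • (⊤ : Submodule Λ M) = I ^ (n + 1) • ⊤ ∧
    Function.Surjective ((TensorProduct.mk Λ M T).flip 1) ∧
    LinearMap.ker ((TensorProduct.mk Λ M T).flip 1) = I ^ n • (⊤ : Submodule Λ M) ∧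
    Nonempty ((M ⊗[Λ] T) ≃ₗ[Λ] M ⧸ (I ^ n • (⊤ : Submodule Λ M))) := by
  have hcl' : ∀ a ∈ I ^ n, ∀ m : ℕ, a ∈ (⊤ : Submodule Λ M).annihilator ⊔ I ^ m := by
    intro a ha m
    exact Submodule.mem_iInf _ |>.mp (hcl ha) m
  -- Part 1 : `Iⁿ•M = Iⁿ⁺¹•M`
  have part1 : I ^ n • (⊤ : Submodule Λ M) = I ^ (n + 1) • ⊤ := by
    refine le_antisymm ?_ (Submodule.smul_mono_left (Ideal.pow_le_pow_right (Nat.le_succ n)))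
    rw [Submodule.smul_le]
    intro a ha m _
    obtain ⟨b, hb, c, hc, rfl⟩ := Submodule.mem_sup.mp (hcl' a ha (n + 1))
    rw [add_smul, Submodule.mem_annihilator.mp hb m trivial, zero_add]
    exact Submodule.smul_mem_smul hc trivial
  -- Key lemma: elements of `Iⁿ•M` are killed by tensoring with any `t : T`
  have key : ∀ k ∈ I ^ n • (⊤ : Submodule Λ M), ∀ t : T, (k ⊗ₜ[Λ] t : M ⊗[Λ] T) = 0 := by
    intro k hk
    refine Submodule.smul_induction_on hk ?_ ?_
    · intro a ha m _
      obtain ⟨i, hi, hJ⟩ := krull_aux I ((⊤ : Submodule Λ M).annihilator) a (hcl' a ha)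
      have hzero : ((1 + i) * a) • m = 0 := Submodule.mem_annihilator.mp hJ m trivial
      obtain ⟨u, hu⟩ := hzar (algebraMap Λ T i) (Ideal.mem_map_of_mem _ hi)
      have h0 : ∀ t : T, ((a • m : M) ⊗ₜ[Λ] ((u : T) * t) : M ⊗[Λ] T) = 0 := by
        intro t
        have : (((1 + i) * a) • m) ⊗ₜ[Λ] t = ((a • m : M) ⊗ₜ[Λ] ((u : T) * t) : M ⊗[Λ] T) := by
          rw [mul_smul, TensorProduct.smul_tmul, Algebra.smul_def, map_add, map_one, hu]
        rw [← this, hzero, TensorProduct.zero_tmul]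
      intro t
      have := h0 ((u⁻¹ : Tˣ) * t)
      rwa [← mul_assoc, u.mul_inv, one_mul] at this
    · intro x y hx hy t
      rw [TensorProduct.add_tmul, hx t, hy t, add_zero]
  -- Lemma D : `m ⊗ s = 0` for `s ∈ (Iⁿ)·T`
  have keyD : ∀ (m : M), ∀ s ∈ (I ^ n).map (algebraMap Λ T), (m ⊗ₜ[Λ] s : M ⊗[Λ] T) = 0 := by
    intro m s hs
    have hs' : s ∈ Submodule.span T ((algebraMap Λ T) '' ((I ^ n : Ideal Λ) : Set Λ)) := hs
    have main : ∀ s ∈ Submodule.span T ((algebraMap Λ T) '' ((I ^ n : Ideal Λ) : Set Λ)),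
        ∀ t : T, (m ⊗ₜ[Λ] (t * s) : M ⊗[Λ] T) = 0 := by
      intro s hs
      refine Submodule.span_induction ?_ ?_ ?_ ?_ hs
      · rintro _ ⟨c, hc, rfl⟩ t
        rw [mul_comm, ← Algebra.smul_def, ← TensorProduct.smul_tmul]
        exact key _ (Submodule.smul_mem_smul hc trivial) t
      · intro t; rw [mul_zero, TensorProduct.tmul_zero]
      · intro x y _ _ hx hy t
        rw [mul_add, TensorProduct.tmul_add, hx t, hy t, add_zero]
      · intro t' x _ hx t
        rw [smul_eq_mul, ← mul_assoc]
        exact hx (t * t')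
    have := main s hs' 1
    rwa [one_mul] at this
  -- the isomorphism `Λ ⧸ Iⁿ ≃+* T ⧸ Ĩⁿ`
  set J := (I.map (algebraMap Λ T)) ^ n with hJdef
  let e : (Λ ⧸ I ^ n) ≃+* (T ⧸ J) := RingEquiv.ofBijective _ (hiso n)
  have he : ∀ c : Λ, e (Ideal.Quotient.mk (I ^ n) c)
      = Ideal.Quotient.mk J (algebraMap Λ T c) := by
    intro c
    rw [RingEquiv.ofBijective_apply]
    exact Ideal.quotientMap_mk
  -- scalar helpers on `M ⧸ Iⁿ•M`
  have mk_smul : ∀ (c : Λ) (x : M ⧸ (I ^ n • (⊤ : Submodule Λ M))),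
      (Ideal.Quotient.mk (I ^ n) c) • x = c • x := by
    intro c x
    obtain ⟨m, rfl⟩ := Submodule.Quotient.mk_surjective _ x
    rfl
  have smul_assoc' : ∀ (c : Λ) (s : Λ ⧸ I ^ n) (x : M ⧸ (I ^ n • (⊤ : Submodule Λ M))),
      (c • s) • x = c • (s • x) := by
    intro c s x
    obtain ⟨b, rfl⟩ := Ideal.Quotient.mk_surjective s
    obtain ⟨m, rfl⟩ := Submodule.Quotient.mk_surjective _ x
    show Submodule.Quotient.mk ((c * b) • m) = Submodule.Quotient.mk (c • b • m)
    rw [mul_smul]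
  have smul_comm' : ∀ (c : Λ) (s : Λ ⧸ I ^ n) (x : M ⧸ (I ^ n • (⊤ : Submodule Λ M))),
      s • (c • x) = c • (s • x) := by
    intro c s x
    obtain ⟨b, rfl⟩ := Ideal.Quotient.mk_surjective s
    obtain ⟨m, rfl⟩ := Submodule.Quotient.mk_surjective _ x
    show Submodule.Quotient.mk (b • c • m) = Submodule.Quotient.mk (c • b • m)
    rw [smul_comm]
  -- the `Λ`-linear map `f : T → Λ ⧸ Iⁿ`
  let f : T →ₗ[Λ] (Λ ⧸ I ^ n) :=
    { toFun := fun t => e.symm (Ideal.Quotient.mk J t)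
      map_add' := fun x y => by rw [map_add, map_add]
      map_smul' := fun c t => by
        simp only [RingHom.id_apply]
        apply e.injective
        rw [RingEquiv.apply_symm_apply, Algebra.smul_def c t, map_mul,
          Algebra.smul_def c (e.symm (Ideal.Quotient.mk J t)), Ideal.Quotient.algebraMap_eq,
          map_mul, he, RingEquiv.apply_symm_apply] }
  have hf1 : f 1 = 1 := by
    show e.symm (Ideal.Quotient.mk J 1) = 1
    rw [map_one, map_one]
  -- the bilinear map `B (m, t) = f t • mk m` and the induced `ψ : M ⊗ T → M ⧸ Iⁿ•M`
  let B : M →ₗ[Λ] T →ₗ[Λ] (M ⧸ (I ^ n • (⊤ : Submodule Λ M))) :=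
    { toFun := fun m =>
        { toFun := fun t => f t • Submodule.Quotient.mk m
          map_add' := fun x y => by rw [map_add, add_smul]
          map_smul' := fun c t => by
            simp only [RingHom.id_apply]
            rw [map_smul, smul_assoc'] }
      map_add' := fun x y => by
        ext t
        simp only [LinearMap.coe_mk, AddHom.coe_mk, LinearMap.add_apply]
        rw [Submodule.Quotient.mk_add, smul_add]
      map_smul' := fun c m => by
        ext t
        simp only [LinearMap.coe_mk, AddHom.coe_mk, RingHom.id_apply, LinearMap.smul_apply]
        rw [Submodule.Quotient.mk_smul, smul_comm'] }
  let ψ : M ⊗[Λ] T →ₗ[Λ] (M ⧸ (I ^ n • (⊤ : Submodule Λ M))) := TensorProduct.lift B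
  have hψ : ∀ (m : M) (t : T), ψ (m ⊗ₜ t) = f t • Submodule.Quotient.mk m :=
    fun m t => rfl
  -- surjectivity of `φ_M`
  have hφ : ∀ m : M, ((TensorProduct.mk Λ M T).flip 1) m = m ⊗ₜ 1 := fun m => rfl
  have hsurj : Function.Surjective ((TensorProduct.mk Λ M T).flip 1) := by
    intro x
    induction x using TensorProduct.induction_on with
    | zero => exact ⟨0, by rw [hφ, TensorProduct.zero_tmul]⟩
    | tmul m t =>
      obtain ⟨abar, habar⟩ := (hiso n).2 (Ideal.Quotient.mk J t)
      obtain ⟨a, rfl⟩ := Ideal.Quotient.mk_surjective abar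
      have hmk : Ideal.Quotient.mk J (algebraMap Λ T a) = Ideal.Quotient.mk J t := by
        rwa [Ideal.quotientMap_mk] at habar
      have hmem : t - algebraMap Λ T a ∈ (I ^ n).map (algebraMap Λ T) := by
        rw [Ideal.map_pow]
        exact (Ideal.Quotient.mk_eq_mk_iff_sub_mem t (algebraMap Λ T a)).mp hmk.symm
      have h2 : (m ⊗ₜ[Λ] (t - algebraMap Λ T a) : M ⊗[Λ] T) = 0 := keyD m _ hmem
      refine ⟨a • m, ?_⟩
      have hsplit : (m ⊗ₜ[Λ] t : M ⊗[Λ] T)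
          = m ⊗ₜ (algebraMap Λ T a) + m ⊗ₜ (t - algebraMap Λ T a) := by
        rw [← TensorProduct.tmul_add, add_sub_cancel]
      rw [hφ, hsplit, h2, add_zero, TensorProduct.smul_tmul,
        ← Algebra.algebraMap_eq_smul_one]
    | add x y hx hy =>
      obtain ⟨mx, hmx⟩ := hx
      obtain ⟨my, hmy⟩ := hy
      exact ⟨mx + my, by rw [map_add, hmx, hmy]⟩
  -- the kernel of `φ_M`
  have hker : LinearMap.ker ((TensorProduct.mk Λ M T).flip 1)
      = I ^ n • (⊤ : Submodule Λ M) := by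
    ext m
    rw [LinearMap.mem_ker, hφ]
    constructor
    · intro h
      have h2 := congrArg ψ h
      rw [hψ, map_zero, hf1, one_smul] at h2
      exact (Submodule.Quotient.mk_eq_zero _).mp h2
    · intro h
      exact key m h 1
  exact ⟨part1, hsurj, hker, ⟨(LinearMap.quotKerEquivOfSurjective _ hsurj).symm.trans
    (Submodule.quotEquivOfEq _ _ hker)⟩⟩
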